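/- Let G be a group acting faithfully on a set X, and let a, b ∈ G with b² ≠ 1. Suppose X_a and X_b are subsets of X with neither contained in the other, such that for every integer n: if bⁿ ≠ 1 then bⁿ · X_a ⊆ X_b, and if aⁿ ≠ 1 then aⁿ · X_b ⊆ X_a. Then the subgroup ⟨a, b⟩ is naturally isomorphic to the free product ⟨a⟩ * ⟨b⟩. -/

import Mathlib

open Subgroup Pointwise

theorem stmt_2 {G : Type*} [Group G] {X : Type*} [MulAction G X] [FaithfulSMul G X]
    (a b : G) (hb : b ^ 2 ≠ 1) (Xa Xb : Set X)
    (hab : ¬ Xa ⊆ Xb) (hba : ¬ Xb ⊆ Xa)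
    (hB : ∀ n : ℤ, b ^ n ≠ 1 → (b ^ n) • Xa ⊆ Xb)
    (hA : ∀ n : ℤ, a ^ n ≠ 1 → (a ^ n) • Xb ⊆ Xa) :
    Function.Injective
      ⇑(Monoid.Coprod.lift (Subgroup.zpowers a).subtype (Subgroup.zpowers b).subtype) := by
  classical
  have hb1 : b ≠ 1 := fun h => hb (by simp [h])
  -- Set up the Bool-indexed family
  set S : Bool → Subgroup G := fun i => cond i (zpowers b) (zpowers a) with hS
  let H : Bool → Type _ := fun i => ↥(S i)
  let f : ∀ i, H i →* G := fun i => (S i).subtype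
  let Y : Bool → Set X := fun i => cond i Xb Xa
  have hpp : Pairwise fun i j => ∀ h : H i, h ≠ 1 → f i h • Y j ⊆ Y i := by
    intro i j hij h hne
    have hne' : (h : G) ≠ 1 := fun hc => hne (Subtype.ext hc)
    cases i
    · obtain ⟨n, hn⟩ := Subgroup.mem_zpowers_iff.mp h.2
      have : a ^ n ≠ 1 := by rw [hn]; exact hne'
      cases j
      · exact absurd rfl hij
      · have := hA n this
        have h2 : (h : G) • Xb ⊆ Xa := by simpa [hn] using this
        exact h2
    · obtain ⟨n, hn⟩ := Subgroup.mem_zpowers_iff.mp h.2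
      have : b ^ n ≠ 1 := by rw [hn]; exact hne'
      cases j
      · have := hB n this
        have h2 : (h : G) • Xa ⊆ Xb := by simpa [hn] using this
        exact h2
      · exact absurd rfl hij
  -- nontriviality for words with same start and end
  have same : ∀ {i} (w : Monoid.CoprodI.NeWord H i i),
      Monoid.CoprodI.lift f w.prod ≠ 1 := by
    intro i w h1
    have := Monoid.CoprodI.lift_word_ping_pong f Y hpp w (k := !i)
      (by cases i <;> simp)
    rw [h1, one_smul] at this
    cases i
    · exact hba this
    · exact hab this
  -- choice of an auxiliary element in ⟨b⟩
  have exists_t : ∀ c : H true, ∃ t : H true, t ≠ 1 ∧ t ≠ c := by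
    intro c
    by_cases hc : c = ⟨b, mem_zpowers b⟩
    · refine ⟨⟨b ^ 2, pow_mem (mem_zpowers b) 2⟩, ?_, ?_⟩
      · intro h; exact hb (congrArg Subtype.val h)
      · rw [hc]
        intro h
        have hbb : b ^ 2 = b := congrArg Subtype.val h
        apply hb1
        have : b * b = b * 1 := by rw [mul_one, ← pow_two]; exact hbb
        exact mul_left_cancel this
    · exact ⟨⟨b, mem_zpowers b⟩, fun h => hb1 (congrArg Subtype.val h),
        fun h => hc (h ▸ rfl)⟩
  -- mixed words: true → false
  have mixed_tf : ∀ (w : Monoid.CoprodI.NeWord H true false),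
      Monoid.CoprodI.lift f w.prod ≠ 1 := by
    intro w heq1
    obtain ⟨t, ht1, ht2⟩ := exists_t w.head⁻¹
    have hnot1 : t * w.head ≠ 1 := fun hone => ht2 (mul_eq_one_iff_eq_inv.mp hone)
    let w' : Monoid.CoprodI.NeWord H true true :=
      Monoid.CoprodI.NeWord.append (Monoid.CoprodI.NeWord.mulHead w t hnot1)
        Bool.false_ne_true
        (Monoid.CoprodI.NeWord.singleton t⁻¹ (inv_ne_one.mpr ht1))
    apply same w'
    simp only [w', Monoid.CoprodI.NeWord.append_prod,
      Monoid.CoprodI.NeWord.mulHead_prod, Monoid.CoprodI.NeWord.prod_singleton,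
      map_mul, Monoid.CoprodI.lift_of, heq1]
    simp [heq1]
  -- all nonempty words are nontrivial
  have key : ∀ {i j} (w : Monoid.CoprodI.NeWord H i j),
      Monoid.CoprodI.lift f w.prod ≠ 1 := by
    intro i j w
    match i, j with
    | false, false => exact same w
    | true, true => exact same w
    | true, false => exact mixed_tf w
    | false, true =>
      intro h1
      apply mixed_tf w.inv
      rw [Monoid.CoprodI.NeWord.inv_prod, map_inv, h1, inv_one]
  -- injectivity of the CoprodI lift
  have inj : Function.Injective (Monoid.CoprodI.lift f) := by
    apply (injective_iff_map_eq_one _).mpr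
    rw [Monoid.CoprodI.Word.equiv.forall_congr_left]
    intro w Heq
    dsimp [Monoid.CoprodI.Word.equiv] at *
    by_cases hnot : w = .empty
    · rw [hnot, Monoid.CoprodI.Word.prod_empty]
    · obtain ⟨i, j, w, rfl⟩ := Monoid.CoprodI.NeWord.of_word w hnot
      exact absurd Heq (key w)
  -- transfer to the binary coproduct
  let φ : Monoid.Coprod ↥(zpowers a) ↥(zpowers b) →* Monoid.CoprodI H :=
    Monoid.Coprod.lift (Monoid.CoprodI.of (M := H) (i := false)) (Monoid.CoprodI.of (M := H) (i := true))
  let ψ : Monoid.CoprodI H →* Monoid.Coprod ↥(zpowers a) ↥(zpowers b) :=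
    Monoid.CoprodI.lift (fun i => match i with
      | false => Monoid.Coprod.inl
      | true => Monoid.Coprod.inr)
  have hψφ : ψ.comp φ = MonoidHom.id _ := by
    apply Monoid.Coprod.hom_ext <;> ext x
    · show ψ (φ (Monoid.Coprod.inl x)) = Monoid.Coprod.inl x
      rw [show φ (Monoid.Coprod.inl x) = Monoid.CoprodI.of (i := false) x from
        Monoid.Coprod.lift_apply_inl _ _ x, Monoid.CoprodI.lift_of]
    · show ψ (φ (Monoid.Coprod.inr x)) = Monoid.Coprod.inr x
      rw [show φ (Monoid.Coprod.inr x) = Monoid.CoprodI.of (i := true) x from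
        Monoid.Coprod.lift_apply_inr _ _ x, Monoid.CoprodI.lift_of]
  have φinj : Function.Injective φ :=
    Function.LeftInverse.injective (fun x => DFunLike.congr_fun hψφ x)
  have heq : Monoid.Coprod.lift (zpowers a).subtype (zpowers b).subtype =
      (Monoid.CoprodI.lift f).comp φ := by
    apply Monoid.Coprod.hom_ext <;> ext x
    · show (zpowers a).subtype x = Monoid.CoprodI.lift f (φ (Monoid.Coprod.inl x))
      rw [show φ (Monoid.Coprod.inl x) = Monoid.CoprodI.of (i := false) x from
        Monoid.Coprod.lift_apply_inl _ _ x, Monoid.CoprodI.lift_of]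
      rfl
    · show (zpowers b).subtype x = Monoid.CoprodI.lift f (φ (Monoid.Coprod.inr x))
      rw [show φ (Monoid.Coprod.inr x) = Monoid.CoprodI.of (i := true) x from
        Monoid.Coprod.lift_apply_inr _ _ x, Monoid.CoprodI.lift_of]
      rfl
  rw [heq, MonoidHom.coe_comp]
  exact inj.comp φinj
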